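/- Let t ≥ 2, let P = (X, F) be a t-tight Berge-path with core vertex sequence v₁, v₂, … (finite or infinite), let B ⊆ ℕ, and let F' be the set of t-element sets of consecutive core vertices of P that contain at least one element of B. Then |X ∩ B| ≤ |F'| + t − 1 (with the convention that if X is infinite the inequality is between cardinals/extended naturals). -/

import Mathlib

/-- Counting fact (3): for a `t`-tight Berge-path whose core vertex sequence is
`v 0, v 1, …` (of length `N ∈ ℕ∞`, the vertices distinct) and a set `B ⊆ ℕ`,
letting `F'` be the collection of sets of `t` consecutive core vertices
containing at least one element of `B`, we have `|X ∩ B| ≤ |F'| + t - 1`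
(as extended naturals). -/
theorem core_meets_block_bound (t : ℕ) (ht : 2 ≤ t) (N : ℕ∞) (v : ℕ → ℕ)
    (hinj : ∀ i j : ℕ, (i : ℕ∞) < N → (j : ℕ∞) < N → v i = v j → i = j)
    (B : Set ℕ) :
    ({x | ∃ i : ℕ, (i : ℕ∞) < N ∧ v i = x} ∩ B).encard ≤
      {f : Finset ℕ | ∃ i : ℕ, ((i + t : ℕ) : ℕ∞) ≤ N ∧
        f = Finset.image v (Finset.Ico i (i + t)) ∧ ∃ x ∈ f, x ∈ B}.encard
        + ((t - 1 : ℕ) : ℕ∞) := by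
  classical
  set S : Set ℕ := {x | ∃ i : ℕ, (i : ℕ∞) < N ∧ v i = x} ∩ B with hS
  set F' : Set (Finset ℕ) := {f : Finset ℕ | ∃ i : ℕ, ((i + t : ℕ) : ℕ∞) ≤ N ∧
        f = Finset.image v (Finset.Ico i (i + t)) ∧ ∃ x ∈ f, x ∈ B} with hF'
  set S1 : Set ℕ := {x ∈ S | ∃ i : ℕ, ((i + t : ℕ) : ℕ∞) ≤ N ∧ v i = x} with hS1
  have hsplit : S.encard ≤ S1.encard + (S \ S1).encard := by
    have : S ⊆ S1 ∪ (S \ S1) := by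
      intro x hx
      by_cases h : x ∈ S1
      · exact Or.inl h
      · exact Or.inr ⟨hx, h⟩
    exact le_trans (Set.encard_le_encard this) (Set.encard_union_le _ _)
  -- the map from S1 to F'
  have hS1F : S1.encard ≤ F'.encard := by
    set f : ℕ → Finset ℕ := fun x =>
      if h : ∃ i : ℕ, ((i + t : ℕ) : ℕ∞) ≤ N ∧ v i = x then
        Finset.image v (Finset.Ico h.choose (h.choose + t)) else ∅ with hf
    have key : ∀ x ∈ S1, ∃ i : ℕ, ((i + t : ℕ) : ℕ∞) ≤ N ∧ v i = x ∧
        f x = Finset.image v (Finset.Ico i (i + t)) := by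
      intro x hx
      obtain ⟨-, h⟩ := hx
      refine ⟨h.choose, h.choose_spec.1, h.choose_spec.2, ?_⟩
      simp only [hf, dif_pos h]
    have hmem : ∀ x ∈ S1, f x ∈ F' := by
      intro x hx
      obtain ⟨i, hiN, hvi, hfx⟩ := key x hx
      refine ⟨i, hiN, hfx, x, ?_, hx.1.2⟩
      rw [hfx]
      exact Finset.mem_image.2 ⟨i, Finset.mem_Ico.2 ⟨le_rfl, by omega⟩, hvi⟩
    have hinjOn : Set.InjOn f S1 := by
      intro x hx y hy hxy
      obtain ⟨i, hiN, hvi, hfx⟩ := key x hx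
      obtain ⟨j, hjN, hvj, hfy⟩ := key y hy
      have hltN : ∀ a : ℕ, a < i + t → (a : ℕ∞) < N := fun a ha =>
        lt_of_lt_of_le (by exact_mod_cast ha) hiN
      have hltN' : ∀ a : ℕ, a < j + t → (a : ℕ∞) < N := fun a ha =>
        lt_of_lt_of_le (by exact_mod_cast ha) hjN
      have heq : Finset.image v (Finset.Ico i (i + t)) =
          Finset.image v (Finset.Ico j (j + t)) := by rw [← hfx, ← hfy, hxy]
      have hij : i = j := by
        have h1 : v i ∈ Finset.image v (Finset.Ico j (j + t)) := by
          rw [← heq]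
          exact Finset.mem_image.2 ⟨i, Finset.mem_Ico.2 ⟨le_rfl, by omega⟩, rfl⟩
        have h2 : v j ∈ Finset.image v (Finset.Ico i (i + t)) := by
          rw [heq]
          exact Finset.mem_image.2 ⟨j, Finset.mem_Ico.2 ⟨le_rfl, by omega⟩, rfl⟩
        obtain ⟨b, hb, hvb⟩ := Finset.mem_image.1 h1
        obtain ⟨a, ha, hva⟩ := Finset.mem_image.1 h2
        rw [Finset.mem_Ico] at hb ha
        have hib : i = b := hinj i b (hltN i (by omega)) (hltN' b hb.2) hvb.symm
        have hja : j = a := hinj j a (hltN' j (by omega)) (hltN a ha.2) hva.symm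
        omega
      rw [← hvi, ← hvj, hij]
    calc S1.encard = (f '' S1).encard := (hinjOn.encard_image).symm
      _ ≤ F'.encard := Set.encard_le_encard (Set.image_subset_iff.2 hmem)
  -- the leftover part
  have hS2 : (S \ S1).encard ≤ ((t - 1 : ℕ) : ℕ∞) := by
    cases N with
    | top =>
      have : S \ S1 = ∅ := by
        ext x
        simp only [Set.mem_diff, Set.mem_empty_iff_false, iff_false, not_and, not_not]
        intro hx
        obtain ⟨⟨i, hi, hvi⟩, hxB⟩ := hx
        exact ⟨⟨⟨i, hi, hvi⟩, hxB⟩, i, le_top, hvi⟩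
      rw [this, Set.encard_empty]
      exact zero_le
    | coe n =>
      set g : ℕ → ℕ := fun x =>
        if h : ∃ i : ℕ, i < n ∧ v i = x then h.choose else 0 with hg
      have key : ∀ x ∈ S \ S1, g x < n ∧ v (g x) = x ∧ n < g x + t := by
        intro x hx
        obtain ⟨⟨⟨i, hiN, hvi⟩, hxB⟩, hnot⟩ := hx
        have hin : i < n := by exact_mod_cast hiN
        have h : ∃ i : ℕ, i < n ∧ v i = x := ⟨i, hin, hvi⟩
        have hgx : g x = h.choose := by simp only [hg, dif_pos h]
        have h1 := h.choose_spec.1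
        have h2 := h.choose_spec.2
        refine ⟨by omega, by rw [hgx]; exact h2, ?_⟩
        by_contra hcon
        push_neg at hcon
        exact hnot ⟨⟨⟨i, hiN, hvi⟩, hxB⟩, h.choose, by exact_mod_cast (by omega : h.choose + t ≤ n), h2⟩
      have hmem : ∀ x ∈ S \ S1, g x ∈ (Finset.Ico (n + 1 - t) n : Finset ℕ) := by
        intro x hx
        obtain ⟨h1, h2, h3⟩ := key x hx
        exact Finset.mem_Ico.2 ⟨by omega, h1⟩
      have hinjOn : Set.InjOn g (S \ S1) := by
        intro x hx y hy hxy
        obtain ⟨-, hvx, -⟩ := key x hx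
        obtain ⟨-, hvy, -⟩ := key y hy
        rw [← hvx, ← hvy, hxy]
      calc (S \ S1).encard = (g '' (S \ S1)).encard := (hinjOn.encard_image).symm
        _ ≤ (↑(Finset.Ico (n + 1 - t) n) : Set ℕ).encard := by
            apply Set.encard_le_encard
            intro y hy
            obtain ⟨x, hx, rfl⟩ := hy
            exact hmem x hx
        _ = ((Finset.Ico (n + 1 - t) n).card : ℕ∞) := Set.encard_coe_eq_coe_finsetCard _
        _ ≤ ((t - 1 : ℕ) : ℕ∞) := by
            rw [Nat.card_Ico]
            exact_mod_cast (by omega : n - (n + 1 - t) ≤ t - 1)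
  calc S.encard ≤ S1.encard + (S \ S1).encard := hsplit
    _ ≤ F'.encard + ((t - 1 : ℕ) : ℕ∞) := add_le_add hS1F hS2
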